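/- In the gap-recovery setup with 1 ≥ p > q ≥ 0, let Y* = diag(J_{s_1×s_1}, …, J_{s_K×s_K}) be the ground-truth cluster matrix, s̲ = s_{r+1} (with s̲ = 0 if r = K), and let A = (p−q)Y* + qJ + W for a symmetric matrix W ∈ ℝ^{n×n}. Then for any λ ∈ ℝ and any Y ∈ F_n satisfying J̄ ∘ Y = Ȳ: the matrix J̲ ∘ Y is positive semidefinite (so tr(J̲ ∘ Y) ≥ 0), and ⟨Y − Ȳ, A − ((p+q)/2)J⟩ − λ·tr(Y − Ȳ) ≤ (((p−q)/2)·s̲ + ‖W‖_op − λ)·tr(J̲ ∘ Y). -/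

import Mathlib

open Matrix

/-- Feasible set of the recovery SDP: symmetric PSD matrices with entries in `[0,1]`. -/
def FeasSDP {d : ℕ} (Y : Matrix (Fin d) (Fin d) ℝ) : Prop :=
  Y.PosSemidef ∧ ∀ i j, 0 ≤ Y i j ∧ Y i j ≤ 1

/-- The ℓ²→ℓ² operator norm (largest singular value) of a real matrix. -/
noncomputable def opNorm {m n : ℕ} (M : Matrix (Fin m) (Fin n) ℝ) : ℝ :=
  ‖(Matrix.toEuclideanLin M).toContinuousLinearMap‖

/-- Trace inner product `⟨X, Y⟩ = Σ_{i,j} X_{ij} Y_{ij}`. -/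
noncomputable def mip {d : ℕ} (X Y : Matrix (Fin d) (Fin d) ℝ) : ℝ :=
  ∑ i, ∑ j, X i j * Y i j

section helpers

lemma quad_bound {n : ℕ} (W : Matrix (Fin n) (Fin n) ℝ) (x : Fin n → ℝ) :
    x ⬝ᵥ W *ᵥ x ≤ opNorm W * (x ⬝ᵥ x) := by
  set x' : EuclideanSpace ℝ (Fin n) := (WithLp.equiv 2 (Fin n → ℝ)).symm x with hx'
  have h1 : x ⬝ᵥ W *ᵥ x = inner ℝ x' (Matrix.toEuclideanLin W x') := by
    simp [PiLp.inner_apply, x', dotProduct, mulVec, dotProduct, mul_comm]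
  have h2 : x ⬝ᵥ x = ‖x'‖ ^ 2 := by
    rw [EuclideanSpace.norm_eq, Real.sq_sqrt (Finset.sum_nonneg fun i _ => sq_nonneg _)]
    simp [x', dotProduct, pow_two]
  rw [h1, h2]
  calc inner ℝ x' (Matrix.toEuclideanLin W x')
      ≤ ‖x'‖ * ‖Matrix.toEuclideanLin W x'‖ := real_inner_le_norm _ _
    _ ≤ ‖x'‖ * (opNorm W * ‖x'‖) := by
        apply mul_le_mul_of_nonneg_left _ (norm_nonneg _)
        exact ((Matrix.toEuclideanLin W).toContinuousLinearMap).le_opNorm x'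
    _ = opNorm W * ‖x'‖ ^ 2 := by ring

lemma mip_psd_le {n : ℕ} (Z W : Matrix (Fin n) (Fin n) ℝ) (hZ : Z.PosSemidef) :
    mip Z W ≤ opNorm W * Z.trace := by
  obtain ⟨B, hB⟩ : ∃ B : Matrix (Fin n) (Fin n) ℝ, Z = Bᴴ * B := by
    open scoped MatrixOrder Matrix.Norms.L2Operator in
    exact CStarAlgebra.nonneg_iff_eq_star_mul_self.mp hZ.nonneg
  have hZij : ∀ i j, Z i j = ∑ a, B a i * B a j := by
    intro i j; rw [hB]; simp [Matrix.mul_apply, conjTranspose_apply]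
  have swap : ∀ (f : Fin n → Fin n → Fin n → ℝ),
      (∑ i, ∑ j, ∑ a, f i j a) = ∑ a, ∑ i, ∑ j, f i j a := by
    intro f
    calc (∑ i, ∑ j, ∑ a, f i j a) = ∑ i, ∑ a, ∑ j, f i j a :=
          Finset.sum_congr rfl (fun i _ => Finset.sum_comm)
      _ = ∑ a, ∑ i, ∑ j, f i j a := Finset.sum_comm
  have h1 : mip Z W = ∑ a, (fun i => B a i) ⬝ᵥ W *ᵥ (fun i => B a i) := by
    unfold mip
    simp only [hZij, dotProduct, mulVec, dotProduct, Finset.sum_mul, Finset.mul_sum]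
    rw [swap fun i j a => B a i * B a j * W i j]
    congr 1; ext a; congr 1; ext i; congr 1; ext j; ring
  have h2 : Z.trace = ∑ a, (fun i => B a i) ⬝ᵥ (fun i => B a i) := by
    unfold Matrix.trace
    simp only [Matrix.diag, hZij, dotProduct]
    exact Finset.sum_comm
  rw [h1, h2, Finset.mul_sum]
  exact Finset.sum_le_sum fun a _ => quad_bound W _

/-- For a real PSD matrix, `2 Y i j ≤ Y i i + Y j j`. -/
lemma psd_offdiag_bound {n : ℕ} (Y : Matrix (Fin n) (Fin n) ℝ) (hY : Y.PosSemidef)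
    (i j : Fin n) : 2 * Y i j ≤ Y i i + Y j j := by
  have hsym : Y j i = Y i j := by
    have := hY.1; conv_lhs => rw [← this]
    simp [conjTranspose_apply]
  set x : Fin n → ℝ := fun t => (if t = i then 1 else 0) - (if t = j then 1 else 0) with hx
  have h := hY.dotProduct_mulVec_nonneg x
  have hmv : ∀ t, (Y *ᵥ x) t = Y t i - Y t j := by
    intro t
    simp [mulVec, dotProduct, x, mul_sub, Finset.sum_sub_distrib, mul_ite]
  have hd : x ⬝ᵥ (Y *ᵥ x) = Y i i - Y i j - (Y j i - Y j j) := by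
    simp only [dotProduct, hmv]
    simp [x, sub_mul, Finset.sum_sub_distrib, ite_mul]
  rw [star_trivial, hd, hsym] at h
  linarith

end helpers

/-- Lower block bound in the gap-recovery setup: with `A = (p−q)Y* + qJ + W` and
any `Y ∈ F_n` whose "big" part agrees with `Ȳ` (`J̄ ∘ Y = Ȳ`), the matrix `J̲ ∘ Y`
is PSD and `⟨Y − Ȳ, A − ((p+q)/2)J⟩ − λ·tr(Y − Ȳ) ≤ (((p−q)/2)s̲ + ‖W‖_op − λ)·tr(J̲ ∘ Y)`. -/
theorem gap_recovery_small_cluster_bound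
    {n K : ℕ} (s : Fin K → ℕ) (hs : Antitone s) (hspos : ∀ k, 0 < s k)
    (c : Fin n → Fin K) (hc : Monotone c)
    (hcount : ∀ k, (Finset.univ.filter fun i => c i = k).card = s k)
    (r : Fin K)
    (p q : ℝ) (hp : p ≤ 1) (hpq : q < p) (hq : 0 ≤ q)
    (Yb Jbar Jlow Ystar Jmat : Matrix (Fin n) (Fin n) ℝ)
    (hYb : Yb = Matrix.of fun i j => if c i = c j ∧ c i ≤ r then (1 : ℝ) else 0)
    (hJbar : Jbar = Matrix.of fun i j => if c i ≤ r ∨ c j ≤ r then (1 : ℝ) else 0)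
    (hJlow : Jlow = Matrix.of fun i j => if c i ≤ r ∨ c j ≤ r then (0 : ℝ) else 1)
    (hYstar : Ystar = Matrix.of fun i j => if c i = c j then (1 : ℝ) else 0)
    (hJmat : Jmat = Matrix.of fun _ _ => (1 : ℝ))
    (sLow : ℝ)
    (hsLow : sLow = if h : (r : ℕ) + 1 < K then (s ⟨(r : ℕ) + 1, h⟩ : ℝ) else 0)
    (W : Matrix (Fin n) (Fin n) ℝ) (hW : W.IsHermitian)
    (A : Matrix (Fin n) (Fin n) ℝ) (hA : A = (p - q) • Ystar + q • Jmat + W)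
    (lam : ℝ)
    (Y : Matrix (Fin n) (Fin n) ℝ) (hY : FeasSDP Y)
    (hYbig : Matrix.hadamard Jbar Y = Yb) :
    (Matrix.hadamard Jlow Y).PosSemidef ∧
      mip (Y - Yb) (A - ((p + q) / 2) • Jmat) - lam * (Y - Yb).trace ≤
        ((p - q) / 2 * sLow + opNorm W - lam) * (Matrix.hadamard Jlow Y).trace := by
  set Z := Matrix.hadamard Jlow Y with hZdef
  -- entrywise formula for Z
  have hZent : ∀ i j, Z i j = if ¬ c i ≤ r ∧ ¬ c j ≤ r then Y i j else 0 := by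
    intro i j
    simp only [hZdef, Matrix.hadamard_apply, hJlow, Matrix.of_apply]
    by_cases h : c i ≤ r ∨ c j ≤ r
    · rw [if_pos h, zero_mul, if_neg (by tauto)]
    · rw [not_or] at h
      rw [if_neg (by tauto), one_mul, if_pos ⟨h.1, h.2⟩]
  -- Y - Yb = Z
  have hZY : Y - Yb = Z := by
    ext i j
    have hb : Yb i j = Jbar i j * Y i j := by rw [← hYbig]; rfl
    rw [Matrix.sub_apply, hb, hJbar, hZent]
    by_cases h : c i ≤ r ∨ c j ≤ r
    · rw [Matrix.of_apply, if_pos h, one_mul, if_neg (by tauto), sub_self]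
    · rw [not_or] at h
      rw [Matrix.of_apply, if_neg (by tauto), zero_mul, sub_zero, if_pos ⟨h.1, h.2⟩]
  -- PSD of Z
  have hZpsd : Z.PosSemidef := by
    refine Matrix.PosSemidef.of_dotProduct_mulVec_nonneg ?_ ?_
    · ext i j
      have hsym : Y j i = Y i j := by
        have := hY.1.1; conv_lhs => rw [← this]
        simp [conjTranspose_apply]
      simp only [conjTranspose_apply, star_trivial, hZent, hsym, and_comm]
    · intro x
      set y : Fin n → ℝ := fun t => if ¬ c t ≤ r then x t else 0 with hy
      have key : x ⬝ᵥ Z *ᵥ x = y ⬝ᵥ Y *ᵥ y := by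
        simp only [dotProduct, mulVec, dotProduct, Finset.mul_sum]
        refine Finset.sum_congr rfl fun i _ => Finset.sum_congr rfl fun j _ => ?_
        rw [hZent]
        by_cases hi : c i ≤ r <;> by_cases hj : c j ≤ r
        · simp [y, hi, hj, not_lt.mpr hi, not_lt.mpr hj]
        · simp [y, hi, hj, not_lt.mpr hi, not_le.mp hj]
        · simp [y, hi, hj, not_le.mp hi, not_lt.mpr hj]
        · simp only [if_pos (And.intro hi hj)]
          simp [y, hi, hj, not_le.mp hi, not_le.mp hj]
          try ring
      rw [star_trivial, key]
      have h := hY.1.dotProduct_mulVec_nonneg y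
      rwa [star_trivial] at h
  refine ⟨hZpsd, ?_⟩
  rw [hZY]
  -- trace nonneg and diagonal entries
  have hdiag : ∀ i, 0 ≤ Y i i := fun i => (hY.2 i i).1
  have htr : Z.trace = ∑ i, (if ¬ c i ≤ r then Y i i else 0) := by
    unfold Matrix.trace
    refine Finset.sum_congr rfl fun i _ => ?_
    rw [Matrix.diag_apply, hZent]
    by_cases hi : c i ≤ r <;> simp [hi]
  have htrnn : 0 ≤ Z.trace := by
    rw [htr]
    refine Finset.sum_nonneg fun i _ => ?_
    by_cases hi : c i ≤ r <;> simp [hi, hdiag i]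
  -- split mip
  have hM : ∀ i j, (A - ((p + q) / 2) • Jmat) i j
      = (p - q) * (Ystar i j - 1/2) + W i j := by
    intro i j
    rw [hA, hJmat]
    simp only [Matrix.sub_apply, Matrix.add_apply, Matrix.smul_apply, Matrix.of_apply,
      smul_eq_mul, mul_one]
    ring
  have hsplit : mip Z (A - ((p + q) / 2) • Jmat)
      = (∑ i, ∑ j, Z i j * ((p - q) * (Ystar i j - 1/2))) + mip Z W := by
    unfold mip
    rw [← Finset.sum_add_distrib]
    refine Finset.sum_congr rfl fun i _ => ?_
    rw [← Finset.sum_add_distrib]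
    refine Finset.sum_congr rfl fun j _ => ?_
    rw [hM]; ring
  -- bound the structured part
  have hpq' : (0:ℝ) < p - q := by linarith
  have hT : (∑ i, ∑ j, Z i j * ((p - q) * (Ystar i j - 1/2)))
      ≤ (p - q) / 2 * sLow * Z.trace := by
    -- termwise bound by g
    have step1 : (∑ i, ∑ j, Z i j * ((p - q) * (Ystar i j - 1/2)))
        ≤ ∑ i, ∑ j, (if c i = c j ∧ ¬ c i ≤ r ∧ ¬ c j ≤ r
            then (p - q) / 4 * (Y i i + Y j j) else 0) := by
      refine Finset.sum_le_sum fun i _ => Finset.sum_le_sum fun j _ => ?_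
      rw [hZent, hYstar]
      by_cases hij : ¬ c i ≤ r ∧ ¬ c j ≤ r
      · by_cases hcc : c i = c j
        · rw [if_pos hij, Matrix.of_apply, if_pos hcc, if_pos ⟨hcc, hij⟩]
          have h2 := psd_offdiag_bound Y hY.1 i j
          nlinarith [mul_nonneg (le_of_lt hpq') (by linarith : (0:ℝ) ≤ Y i i + Y j j - 2 * Y i j)]
        · rw [if_pos hij, Matrix.of_apply, if_neg hcc, if_neg (fun hh => hcc hh.1)]
          have h0 := (hY.2 i j).1
          nlinarith [mul_nonneg h0 (le_of_lt hpq')]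
      · rw [if_neg hij, zero_mul, if_neg (fun hh => hij hh.2)]
    refine step1.trans ?_
    -- symmetrize
    have hsplit2 : (∑ i, ∑ j, (if c i = c j ∧ ¬ c i ≤ r ∧ ¬ c j ≤ r
            then (p - q) / 4 * (Y i i + Y j j) else 0))
        = ∑ i, ∑ j, (if c i = c j ∧ ¬ c i ≤ r ∧ ¬ c j ≤ r
            then (p - q) / 2 * Y i i else 0) := by
      have e1 : ∀ (i j : Fin n), (if c i = c j ∧ ¬ c i ≤ r ∧ ¬ c j ≤ r
            then (p - q) / 4 * (Y i i + Y j j) else 0)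
          = (if c i = c j ∧ ¬ c i ≤ r ∧ ¬ c j ≤ r then (p - q) / 4 * Y i i else 0)
            + (if c i = c j ∧ ¬ c i ≤ r ∧ ¬ c j ≤ r then (p - q) / 4 * Y j j else 0) := by
        intro i j
        by_cases h : c i = c j ∧ ¬ c i ≤ r ∧ ¬ c j ≤ r
        · rw [if_pos h, if_pos h, if_pos h]; ring
        · rw [if_neg h, if_neg h, if_neg h]; ring
      simp only [e1, Finset.sum_add_distrib]
      have e2 : (∑ i, ∑ j, (if c i = c j ∧ ¬ c i ≤ r ∧ ¬ c j ≤ r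
            then (p - q) / 4 * Y j j else 0))
          = ∑ i, ∑ j, (if c i = c j ∧ ¬ c i ≤ r ∧ ¬ c j ≤ r
            then (p - q) / 4 * Y i i else 0) := by
        rw [Finset.sum_comm]
        refine Finset.sum_congr rfl fun i _ => Finset.sum_congr rfl fun j _ => ?_
        by_cases h : c i = c j ∧ ¬ c i ≤ r ∧ ¬ c j ≤ r
        · rw [if_pos ⟨h.1.symm, h.2.2, h.2.1⟩, if_pos h]
        · rw [if_neg (by tauto), if_neg h]
      rw [e2, ← Finset.sum_add_distrib]
      refine Finset.sum_congr rfl fun i _ => ?_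
      rw [← Finset.sum_add_distrib]
      refine Finset.sum_congr rfl fun j _ => ?_
      by_cases h : c i = c j ∧ ¬ c i ≤ r ∧ ¬ c j ≤ r
      · rw [if_pos h, if_pos h]; ring
      · rw [if_neg h, if_neg h]; ring
    rw [hsplit2]
    -- per-row count
    have hrow : ∀ i, (∑ j, (if c i = c j ∧ ¬ c i ≤ r ∧ ¬ c j ≤ r
            then (p - q) / 2 * Y i i else 0))
        ≤ (p - q) / 2 * sLow * (if ¬ c i ≤ r then Y i i else 0) := by
      intro i
      by_cases hi : c i ≤ r
      · simp only [hi, not_true_eq_false, false_and, and_false, if_false]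
        simp
      · -- count the js
        have hcond : ∀ j, (c i = c j ∧ ¬ c i ≤ r ∧ ¬ c j ≤ r) ↔ c j = c i := by
          intro j
          constructor
          · rintro ⟨h1, _, _⟩; exact h1.symm
          · intro h1
            exact ⟨h1.symm, hi, by rw [h1]; exact hi⟩
        have : (∑ j, (if c i = c j ∧ ¬ c i ≤ r ∧ ¬ c j ≤ r then (p - q) / 2 * Y i i else 0))
            = (s (c i) : ℝ) * ((p - q) / 2 * Y i i) := by
          rw [Finset.sum_ite, Finset.sum_const, Finset.sum_const_zero, add_zero,
            nsmul_eq_mul]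
          congr 2
          rw [← hcount (c i)]
          congr 1
          refine Finset.filter_congr fun j _ => ?_
          exact hcond j
        rw [this]
        simp only [hi, not_false_eq_true, if_true]
        have hlt : (r : ℕ) + 1 < K := by
          have h1 : r < c i := lt_of_not_ge hi
          have : (r : ℕ) + 1 ≤ (c i : ℕ) := h1
          exact lt_of_le_of_lt this (c i).isLt
        have hsle : (s (c i) : ℝ) ≤ sLow := by
          rw [hsLow, dif_pos hlt]
          have : (⟨(r : ℕ) + 1, hlt⟩ : Fin K) ≤ c i := by
            have h1 : r < c i := lt_of_not_ge hi
            exact h1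
          exact_mod_cast hs this
        have hYi := hdiag i
        have hkey := mul_le_mul_of_nonneg_right hsle
          (mul_nonneg (by linarith : (0:ℝ) ≤ (p - q) / 2) hYi)
        nlinarith [hkey]
    calc (∑ i, ∑ j, (if c i = c j ∧ ¬ c i ≤ r ∧ ¬ c j ≤ r
            then (p - q) / 2 * Y i i else 0))
        ≤ ∑ i, (p - q) / 2 * sLow * (if ¬ c i ≤ r then Y i i else 0) :=
          Finset.sum_le_sum fun i _ => hrow i
      _ = (p - q) / 2 * sLow * Z.trace := by rw [htr, Finset.mul_sum]
  have hW' : mip Z W ≤ opNorm W * Z.trace := mip_psd_le Z W hZpsd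
  rw [hsplit]
  have hexp : ((p - q) / 2 * sLow + opNorm W - lam) * Z.trace
      = (p - q) / 2 * sLow * Z.trace + opNorm W * Z.trace - lam * Z.trace := by ring
  rw [hexp]
  linarith [hT, hW']
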